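/- No closed π/2-polygon on the unit sphere in ℝ³ has exactly one red vertex. Equivalently: at a vertex of a polyhedron all of whose faces are rectangles, it is impossible for exactly one incident edge to have a dihedral angle that is not a multiple of π/2. -/
import Mathlib


open scoped RealInnerProductSpace

local notation "E3" => EuclideanSpace ℝ (Fin 3)

/-- If `a, b, c` is an orthonormal triple in `ℝ³` and `v` is a unit vector orthogonal
to `a` and `b`, then `v = ±c`. -/
lemma third_vec_aux {a b c v : EuclideanSpace ℝ (Fin 3)}
    (ha : ‖a‖ = 1) (hb : ‖b‖ = 1) (hc : ‖c‖ = 1)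
    (hab : ⟪a, b⟫ = 0) (hac : ⟪a, c⟫ = 0) (hbc : ⟪b, c⟫ = 0)
    (hv : ‖v‖ = 1) (hva : ⟪v, a⟫ = 0) (hvb : ⟪v, b⟫ = 0) : v = c ∨ v = -c := by
  have haa : ⟪a, a⟫ = 1 := by rw [real_inner_self_eq_norm_sq, ha]; norm_num
  have hbb : ⟪b, b⟫ = 1 := by rw [real_inner_self_eq_norm_sq, hb]; norm_num
  have hcc : ⟪c, c⟫ = 1 := by rw [real_inner_self_eq_norm_sq, hc]; norm_num
  have hba : ⟪b, a⟫ = 0 := by rw [real_inner_comm]; exact hab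
  have hca : ⟪c, a⟫ = 0 := by rw [real_inner_comm]; exact hac
  have hcb : ⟪c, b⟫ = 0 := by rw [real_inner_comm]; exact hbc
  have hon : Orthonormal ℝ ![a, b, c] := by
    constructor
    · intro i; fin_cases i <;> simpa
    · intro i j hij
      fin_cases i <;> fin_cases j <;> simp_all
  have hspan : Submodule.span ℝ (Set.range ![a, b, c]) = ⊤ :=
    hon.linearIndependent.span_eq_top_of_card_eq_finrank
      (by simp [finrank_euclideanSpace_fin])
  have hv' : v ∈ Submodule.span ℝ (Set.range ![a, b, c]) := by rw [hspan]; trivial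
  rw [Submodule.mem_span_range_iff_exists_fun] at hv'
  obtain ⟨g, hg⟩ := hv'
  rw [Fin.sum_univ_three] at hg
  simp only [Matrix.cons_val_zero, Matrix.cons_val_one, Matrix.head_cons,
    Matrix.cons_val_two, Matrix.tail_cons] at hg
  have e0 : g 0 = 0 := by
    have := hva
    rw [← hg] at this
    simp only [inner_add_left, real_inner_smul_left] at this
    rw [haa, hba, hca] at this
    linarith
  have e1 : g 1 = 0 := by
    have := hvb
    rw [← hg] at this
    simp only [inner_add_left, real_inner_smul_left] at this
    rw [hab, hbb, hcb] at this
    linarith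
  have hvc : v = g 2 • c := by rw [← hg, e0, e1]; simp
  have : |g 2| = 1 := by
    have := hv
    rw [hvc, norm_smul, hc, mul_one] at this
    simpa using this
  rcases abs_eq (by norm_num : (0:ℝ) ≤ 1) |>.mp this with h | h
  · left; rw [hvc, h, one_smul]
  · right; rw [hvc, h]; simp

def Sset {n : ℕ} (p : ZMod n → EuclideanSpace ℝ (Fin 3)) (i : ZMod n) :
    Set (EuclideanSpace ℝ (Fin 3)) :=
  {v | v = p i ∨ v = -p i ∨ v = p (i+1) ∨ v = -p (i+1) ∨
    (‖v‖ = 1 ∧ ⟪v, p i⟫ = 0 ∧ ⟪v, p (i+1)⟫ = 0)}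

lemma Sset_step {n : ℕ} (p : ZMod n → EuclideanSpace ℝ (Fin 3))
    (hunit : ∀ i, ‖p i‖ = 1) (horth : ∀ i, ⟪p i, p (i + 1)⟫ = 0) (i : ZMod n)
    (hgreen : ⟪p i, p (i+1+1)⟫ = -1 ∨ ⟪p i, p (i+1+1)⟫ = 0 ∨ ⟪p i, p (i+1+1)⟫ = 1) :
    Sset p i = Sset p (i+1) := by
  set a := p i with hadef
  set b := p (i+1) with hbdef
  set c := p (i+1+1) with hcdef
  have ha := hunit i
  have hb := hunit (i+1)
  have hc := hunit (i+1+1)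
  have hab : ⟪a, b⟫ = 0 := horth i
  have hbc : ⟪b, c⟫ = 0 := horth (i+1)
  rcases hgreen with h | h | h
  · -- c = -a
    have hca : c = -a := by
      have : ⟪a, -c⟫ = 1 := by rw [inner_neg_right, h]; norm_num
      have h2 := (inner_eq_one_iff_of_norm_eq_one ha (by simpa using hc)).mp this
      rw [show a = -c from h2, neg_neg]
    ext v
    simp only [Sset, Set.mem_setOf_eq, ← hadef, ← hbdef, ← hcdef, hca,
      inner_neg_right, neg_neg, neg_eq_zero]
    tauto
  · -- orthonormal triple
    have hca : ⟪c, a⟫ = 0 := by rw [real_inner_comm]; exact h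
    have hcb : ⟪c, b⟫ = 0 := by rw [real_inner_comm]; exact hbc
    have hba : ⟪b, a⟫ = 0 := by rw [real_inner_comm]; exact hab
    ext v
    simp only [Sset, Set.mem_setOf_eq, ← hadef, ← hbdef, ← hcdef]
    constructor
    · rintro (rfl | rfl | rfl | rfl | ⟨h1, h2, h3⟩)
      · exact Or.inr (Or.inr (Or.inr (Or.inr ⟨ha, hab, h⟩)))
      · refine Or.inr (Or.inr (Or.inr (Or.inr ⟨by simpa using ha, ?_, ?_⟩))) <;>
          simp [inner_neg_left, hab, h]
      · exact Or.inl rfl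
      · exact Or.inr (Or.inl rfl)
      · rcases third_vec_aux ha hb hc hab h hbc h1 h2 h3 with rfl | rfl
        · exact Or.inr (Or.inr (Or.inl rfl))
        · exact Or.inr (Or.inr (Or.inr (Or.inl rfl)))
    · rintro (rfl | rfl | rfl | rfl | ⟨h1, h2, h3⟩)
      · exact Or.inr (Or.inr (Or.inl rfl))
      · exact Or.inr (Or.inr (Or.inr (Or.inl rfl)))
      · exact Or.inr (Or.inr (Or.inr (Or.inr ⟨hc, hca, hcb⟩)))
      · refine Or.inr (Or.inr (Or.inr (Or.inr ⟨by simpa using hc, ?_, ?_⟩))) <;>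
          simp [inner_neg_left, hca, hcb]
      · rcases third_vec_aux hb hc ha hbc hba hca h1 h2 h3 with rfl | rfl
        · exact Or.inl rfl
        · exact Or.inr (Or.inl rfl)
  · -- c = a
    have hca : c = a := ((inner_eq_one_iff_of_norm_eq_one ha hc).mp h).symm
    ext v
    simp only [Sset, Set.mem_setOf_eq, ← hadef, ← hbdef, ← hcdef, hca]
    tauto

/-- No closed `π/2`-polygon on the unit sphere in `ℝ³` (a cyclic sequence
`p : ZMod n → ℝ³`, `n ≥ 3`, of pairwise distinct unit vectors with consecutive
points orthogonal) has exactly one red vertex, i.e. exactly one vertex `i` with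
`⟪p (i-1), p (i+1)⟫ ∉ {-1, 0, 1}`. -/
theorem no_polygon_with_exactly_one_red_vertex
    (n : ℕ) (hn : 3 ≤ n) (p : ZMod n → EuclideanSpace ℝ (Fin 3))
    (hinj : Function.Injective p)
    (hunit : ∀ i, ‖p i‖ = 1)
    (horth : ∀ i, ⟪p i, p (i + 1)⟫ = 0) :
    {i : ZMod n | ⟪p (i - 1), p (i + 1)⟫ ∉ ({-1, 0, 1} : Set ℝ)}.ncard ≠ 1 := by
  have : NeZero n := ⟨by omega⟩
  intro h1
  obtain ⟨i₀, hset⟩ := Set.ncard_eq_one.mp h1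
  have hred : ⟪p (i₀ - 1), p (i₀ + 1)⟫ ∉ ({-1, 0, 1} : Set ℝ) := by
    have : i₀ ∈ {i : ZMod n | ⟪p (i - 1), p (i + 1)⟫ ∉ ({-1, 0, 1} : Set ℝ)} := by
      rw [hset]; rfl
    exact this
  have hgreen : ∀ j : ZMod n, j ≠ i₀ →
      ⟪p (j - 1), p (j + 1)⟫ = -1 ∨ ⟪p (j - 1), p (j + 1)⟫ = 0 ∨ ⟪p (j - 1), p (j + 1)⟫ = 1 := by
    intro j hj
    by_contra hcon
    have : j ∈ {i : ZMod n | ⟪p (i - 1), p (i + 1)⟫ ∉ ({-1, 0, 1} : Set ℝ)} := by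
      simp only [Set.mem_setOf_eq, Set.mem_insert_iff, Set.mem_singleton_iff]
      push_neg at hcon ⊢
      exact ⟨hcon.1, hcon.2.1, hcon.2.2⟩
    rw [hset] at this
    exact hj this
  -- invariance chain
  have key : ∀ k : ℕ, k ≤ n - 1 → Sset p i₀ = Sset p (i₀ + (k : ZMod n)) := by
    intro k hk
    induction k with
    | zero => simp
    | succ k ih =>
      have hk' : k ≤ n - 1 := by omega
      have ihk := ih hk'
      have hne : (i₀ + (k : ZMod n)) + 1 ≠ i₀ := by
        intro hcontra
        have : ((k + 1 : ℕ) : ZMod n) = 0 := by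
          have := hcontra
          push_cast
          push_cast at this
          linear_combination this - (i₀ : ZMod n)
        rw [ZMod.natCast_eq_zero_iff] at this
        have := Nat.le_of_dvd (by omega) this
        omega
      have hg := hgreen _ hne
      have e1 : (i₀ + (k : ZMod n)) + 1 - 1 = i₀ + (k : ZMod n) := by ring
      have e2 : (i₀ + (k : ZMod n)) + 1 + 1 = i₀ + (k : ZMod n) + 1 + 1 := rfl
      rw [e1] at hg
      have step := Sset_step p hunit horth (i₀ + (k : ZMod n)) hg
      rw [ihk, step]
      congr 1
      push_cast
      ring
  have hfinal : Sset p i₀ = Sset p (i₀ - 1) := by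
    have := key (n - 1) le_rfl
    rw [this]
    congr 1
    have : ((n - 1 : ℕ) : ZMod n) = -1 := by
      have h : ((n : ℕ) : ZMod n) = 0 := ZMod.natCast_self n
      push_cast [Nat.cast_sub (by omega : 1 ≤ n)]
      rw [h]; ring
    rw [this]; ring
  -- p (i₀ + 1) ∈ Sset p i₀
  have hmem : p (i₀ + 1) ∈ Sset p i₀ := by
    simp only [Sset, Set.mem_setOf_eq]
    tauto
  rw [hfinal] at hmem
  have hsub : i₀ - 1 + 1 = i₀ := by ring
  simp only [Sset, Set.mem_setOf_eq, hsub] at hmem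
  have h00 : ⟪p i₀, p (i₀ + 1)⟫ = 0 := horth i₀
  have hself : ⟪p i₀, p i₀⟫ = 1 := by
    rw [real_inner_self_eq_norm_sq, hunit]; norm_num
  rcases hmem with h | h | h | h | ⟨_, h2, h3⟩
  · exact hred (by rw [h, real_inner_self_eq_norm_sq, hunit]; norm_num)
  · refine hred ?_
    rw [h, inner_neg_right, real_inner_self_eq_norm_sq, hunit]
    norm_num
  · rw [h, hself] at h00; norm_num at h00
  · rw [h, inner_neg_right, hself] at h00; norm_num at h00
  · exact hred (by rw [real_inner_comm]; simp [h2])
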